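/- For all real r, arctan(r) = (r/√(1+r²)) · Σ_{k=0}^∞ ((2k-1)!!/((2k)!!(2k+1))) · (r²/(1+r²))^k. -/

import Mathlib

open Real

/-- (2k)!! = 2^k k! -/
noncomputable def evenDF (k : ℕ) : ℝ := 2 ^ k * k.factorial

/-- (2k-1)!! = (2k)!/(2^k k!), with (-1)!! = 1. -/
noncomputable def oddDF' (k : ℕ) : ℝ := (2 * k).factorial / (2 ^ k * k.factorial)

noncomputable def aDF (k : ℕ) : ℝ := oddDF' k / evenDF k

lemma evenDF_pos (k : ℕ) : 0 < evenDF k := by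
  unfold evenDF; positivity

lemma oddDF'_pos (k : ℕ) : 0 < oddDF' k := by
  unfold oddDF'
  have := Nat.factorial_pos (2 * k)
  positivity

lemma aDF_pos (k : ℕ) : 0 < aDF k := div_pos (oddDF'_pos k) (evenDF_pos k)

lemma aDF_zero : aDF 0 = 1 := by
  simp [aDF, oddDF', evenDF]

lemma aDF_succ (k : ℕ) : (2 * (k : ℝ) + 2) * aDF (k + 1) = (2 * k + 1) * aDF k := by
  have h1 : (2 * (k + 1)) = (2 * k + 1) + 1 := by ring
  have h2 : ((2 * k + 1 + 1).factorial : ℝ) = (2 * k + 1 + 1) * ((2 * k + 1) * (2 * k).factorial) := by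
    rw [Nat.factorial_succ, Nat.factorial_succ]; push_cast; ring
  have hf : (k.factorial : ℝ) ≠ 0 := by exact_mod_cast (Nat.factorial_pos k).ne'
  unfold aDF oddDF' evenDF
  rw [h1, h2]
  have h2k : (2:ℝ) ^ (k + 1) = 2 * 2 ^ k := by ring
  have hkf : ((k + 1).factorial : ℝ) = (k + 1) * k.factorial := by
    rw [Nat.factorial_succ]; push_cast; ring
  rw [h2k, hkf]
  have hp : (2:ℝ) ^ k ≠ 0 := by positivity
  have hk1 : (k : ℝ) + 1 ≠ 0 := by positivity
  field_simp
  push_cast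
  ring

lemma aDF_le_one (k : ℕ) : aDF k ≤ 1 := by
  induction k with
  | zero => rw [aDF_zero]
  | succ n ih =>
      have h := aDF_succ n
      have h1 : (0:ℝ) < 2 * n + 2 := by positivity
      have h2 : (2 * (n:ℝ) + 1) * aDF n ≤ (2 * n + 2) * 1 := by
        nlinarith [aDF_pos n]
      nlinarith


noncomputable def cDF (k : ℕ) : ℝ := oddDF' k / (evenDF k * (2 * k + 1))

lemma cDF_pos (k : ℕ) : 0 < cDF k := by
  unfold cDF oddDF' evenDF
  have := Nat.factorial_pos (2 * k)
  have := Nat.factorial_pos k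
  positivity

lemma cDF_mul (k : ℕ) : cDF k * (2 * (k:ℝ) + 1) = aDF k := by
  unfold cDF aDF
  have h1 : (2 * (k:ℝ) + 1) ≠ 0 := by positivity
  have h2 : evenDF k ≠ 0 := by unfold evenDF; positivity
  field_simp

lemma cDF_le_aDF (k : ℕ) : cDF k ≤ aDF k := by
  rw [← cDF_mul k]
  nlinarith [cDF_pos k]

noncomputable def Sfun (y : ℝ) : ℝ := ∑' k : ℕ, aDF k * y ^ (2 * k)
noncomputable def Sd (y : ℝ) : ℝ := ∑' k : ℕ, aDF k * ((2 * k : ℕ) * y ^ (2 * k - 1))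
noncomputable def Gfun (y : ℝ) : ℝ := ∑' k : ℕ, cDF k * y ^ (2 * k + 1)

lemma abs_term_le (y : ℝ) (k : ℕ) : |aDF k * y ^ (2 * k)| ≤ (y ^ 2) ^ k := by
  rw [abs_mul, abs_of_pos (aDF_pos k), pow_mul, abs_pow, abs_of_nonneg (sq_nonneg y)]
  exact mul_le_of_le_one_left (pow_nonneg (sq_nonneg y) k) (aDF_le_one k)

lemma summable_S {y : ℝ} (hy : |y| < 1) : Summable fun k => aDF k * y ^ (2 * k) := by
  have hy2 : y ^ 2 < 1 := by rwa [sq_lt_one_iff_abs_lt_one]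
  exact Summable.of_norm_bounded (summable_geometric_of_lt_one (sq_nonneg y) hy2)
    (fun k => abs_term_le y k)

lemma summable_Sd {y : ℝ} (hy : |y| < 1) :
    Summable fun k => aDF k * ((2 * k : ℕ) * y ^ (2 * k - 1)) := by
  have h : Summable fun k : ℕ => (2 : ℝ) * ((k : ℝ) * |y| ^ k) := by
    have := summable_pow_mul_geometric_of_norm_lt_one (R := ℝ) 1 (r := |y|) (by simpa)
    simpa using this.mul_left 2
  refine Summable.of_norm_bounded h (fun k => ?_)
  rw [norm_eq_abs, abs_mul, abs_of_pos (aDF_pos k), abs_mul, abs_pow, Nat.abs_cast]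
  rcases Nat.eq_zero_or_pos k with rfl | hk
  · simp
  · have hle : |y| ^ (2 * k - 1) ≤ |y| ^ k :=
      pow_le_pow_of_le_one (abs_nonneg y) hy.le (by omega)
    have h1 : ((2 * k : ℕ) : ℝ) * |y| ^ (2 * k - 1) ≤ 2 * ((k:ℝ) * |y| ^ k) := by
      push_cast
      nlinarith [pow_nonneg (abs_nonneg y) k, pow_nonneg (abs_nonneg y) (2*k-1), (by exact_mod_cast hk : (0:ℝ) < k)]
    nlinarith [aDF_le_one k, aDF_pos k, mul_nonneg (Nat.cast_nonneg (2*k) : (0:ℝ) ≤ (2*k:ℕ)) (pow_nonneg (abs_nonneg y) (2*k-1))]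

lemma summable_G {y : ℝ} (hy : |y| < 1) : Summable fun k => cDF k * y ^ (2 * k + 1) := by
  have hy2 : y ^ 2 < 1 := by rwa [sq_lt_one_iff_abs_lt_one]
  refine Summable.of_norm_bounded (summable_geometric_of_lt_one (sq_nonneg y) hy2) (fun k => ?_)
  rw [norm_eq_abs, abs_mul, abs_of_pos (cDF_pos k), pow_succ, abs_mul, pow_mul, abs_pow,
    abs_of_nonneg (sq_nonneg y)]
  have h1 : cDF k * ((y^2)^k * |y|) ≤ 1 * ((y^2)^k * 1) := by
    apply mul_le_mul (le_trans (cDF_le_aDF k) (aDF_le_one k)) _ (by positivity) one_pos.le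
    exact mul_le_mul_of_nonneg_left hy.le (pow_nonneg (sq_nonneg y) k)
  linarith


lemma mem_ball_iff {ρ z : ℝ} : z ∈ Metric.ball (0:ℝ) ρ ↔ |z| < ρ := by
  simp [Metric.mem_ball, Real.dist_eq]

lemma hasDerivAt_Sfun {y : ℝ} (hy : |y| < 1) : HasDerivAt Sfun (Sd y) y := by
  set ρ : ℝ := (|y| + 1) / 2 with hρ
  have hρ0 : 0 < ρ := by positivity
  have hρ1 : ρ < 1 := by rw [hρ]; linarith
  have hyρ : |y| < ρ := by rw [hρ]; linarith
  have hu : Summable fun k : ℕ => 2 * (k : ℝ) * ρ ^ k := by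
    have := summable_pow_mul_geometric_of_norm_lt_one (R := ℝ) 1
      (r := ρ) (by rwa [norm_eq_abs, abs_of_pos hρ0])
    have h2 := this.mul_left 2
    refine h2.congr (fun k => ?_)
    simp; ring
  have h0mem : (0:ℝ) ∈ Metric.ball (0:ℝ) ρ := mem_ball_iff.2 (by simpa using hρ0)
  have hbound : ∀ (k : ℕ) (z : ℝ), z ∈ Metric.ball (0:ℝ) ρ →
      ‖aDF k * ((2 * k : ℕ) * z ^ (2 * k - 1))‖ ≤ 2 * (k : ℝ) * ρ ^ k := by
    intro k z hz
    rw [mem_ball_iff] at hz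
    rw [norm_eq_abs, abs_mul, abs_of_pos (aDF_pos k), abs_mul, abs_pow, Nat.abs_cast]
    rcases Nat.eq_zero_or_pos k with rfl | hk
    · simp
    · have hle : |z| ^ (2 * k - 1) ≤ ρ ^ k := by
        calc |z| ^ (2 * k - 1) ≤ ρ ^ (2 * k - 1) :=
              pow_le_pow_left₀ (abs_nonneg z) hz.le _
          _ ≤ ρ ^ k := pow_le_pow_of_le_one hρ0.le hρ1.le (by omega)
      have h1 : ((2 * k : ℕ) : ℝ) * |z| ^ (2 * k - 1) ≤ 2 * k * ρ ^ k := by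
        push_cast
        nlinarith [pow_nonneg (abs_nonneg z) (2*k-1)]
      nlinarith [aDF_le_one k, aDF_pos k,
        mul_nonneg (Nat.cast_nonneg (2*k) : (0:ℝ) ≤ (2*k:ℕ)) (pow_nonneg (abs_nonneg z) (2*k-1))]
  exact hasDerivAt_tsum_of_isPreconnected hu Metric.isOpen_ball
    (convex_ball (0:ℝ) ρ).isPreconnected
    (g := fun k z => aDF k * z ^ (2 * k))
    (g' := fun k z => aDF k * ((2 * k : ℕ) * z ^ (2 * k - 1)))
    (fun k z _ => (hasDerivAt_pow (2 * k) z).const_mul (aDF k))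
    hbound h0mem (summable_S (by norm_num)) (mem_ball_iff.2 hyρ)

lemma hasDerivAt_Gfun {y : ℝ} (hy : |y| < 1) : HasDerivAt Gfun (Sfun y) y := by
  set ρ : ℝ := (|y| + 1) / 2 with hρ
  have hρ0 : 0 < ρ := by positivity
  have hρ1 : ρ < 1 := by rw [hρ]; linarith
  have hyρ : |y| < ρ := by rw [hρ]; linarith
  have hu : Summable fun k : ℕ => ρ ^ k := summable_geometric_of_lt_one hρ0.le hρ1
  have h0mem : (0:ℝ) ∈ Metric.ball (0:ℝ) ρ := mem_ball_iff.2 (by simpa using hρ0)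
  have hderiv : ∀ (k : ℕ) (z : ℝ), z ∈ Metric.ball (0:ℝ) ρ →
      HasDerivAt (fun z => cDF k * z ^ (2 * k + 1)) (aDF k * z ^ (2 * k)) z := by
    intro k z _
    have h := (hasDerivAt_pow (2 * k + 1) z).const_mul (cDF k)
    refine h.congr_deriv ?_
    have h2 : (2 * k + 1 - 1) = 2 * k := by omega
    rw [h2, ← cDF_mul k]
    push_cast
    ring
  have hbound : ∀ (k : ℕ) (z : ℝ), z ∈ Metric.ball (0:ℝ) ρ →
      ‖aDF k * z ^ (2 * k)‖ ≤ ρ ^ k := by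
    intro k z hz
    rw [mem_ball_iff] at hz
    rw [norm_eq_abs, abs_mul, abs_of_pos (aDF_pos k), abs_pow]
    calc aDF k * |z| ^ (2 * k) ≤ 1 * ρ ^ (2 * k) := by
          apply mul_le_mul (aDF_le_one k)
            (pow_le_pow_left₀ (abs_nonneg z) hz.le _) (by positivity) one_pos.le
      _ ≤ ρ ^ k := by
          rw [one_mul]
          exact pow_le_pow_of_le_one hρ0.le hρ1.le (by omega)
  exact hasDerivAt_tsum_of_isPreconnected hu Metric.isOpen_ball
    (convex_ball (0:ℝ) ρ).isPreconnected
    (g := fun k z => cDF k * z ^ (2 * k + 1))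
    (g' := fun k z => aDF k * z ^ (2 * k))
    hderiv hbound h0mem (summable_G (by norm_num)) (mem_ball_iff.2 hyρ)

lemma ode {y : ℝ} (hy : |y| < 1) : (1 - y ^ 2) * Sd y = y * Sfun y := by
  have hsd := summable_Sd hy
  have hs := summable_S hy
  have hA : Summable fun k : ℕ => (2 * (k:ℝ) + 2) * aDF (k + 1) * y ^ (2 * k + 1) := by
    have h := (summable_nat_add_iff 1).2 hsd
    refine h.congr (fun k => ?_)
    have h1 : 2 * (k + 1) - 1 = 2 * k + 1 := by omega
    simp only [h1]
    push_cast
    ring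
  have hB : Summable fun k : ℕ => 2 * (k:ℝ) * aDF k * y ^ (2 * k + 1) := by
    have h := hsd.mul_left (y ^ 2)
    refine h.congr (fun k => ?_)
    rcases k with _ | n
    · simp
    · have h1 : 2 * (n + 1) - 1 = 2 * n + 1 := by omega
      have h2 : 2 * (n + 1) + 1 = (2 * n + 1) + 2 := by omega
      rw [h1, h2]
      push_cast
      ring
  have stepA : Sd y = ∑' k : ℕ, (2 * (k:ℝ) + 2) * aDF (k + 1) * y ^ (2 * k + 1) := by
    unfold Sd
    rw [Summable.tsum_eq_zero_add hsd]
    simp only [Nat.mul_zero, Nat.cast_zero, zero_mul, mul_zero, zero_add]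
    refine tsum_congr (fun k => ?_)
    have h1 : 2 * (k + 1) - 1 = 2 * k + 1 := by omega
    rw [h1]
    push_cast
    ring
  have stepB : y ^ 2 * Sd y = ∑' k : ℕ, 2 * (k:ℝ) * aDF k * y ^ (2 * k + 1) := by
    unfold Sd
    rw [← tsum_mul_left]
    refine tsum_congr (fun k => ?_)
    rcases k with _ | n
    · simp
    · have h1 : 2 * (n + 1) - 1 = 2 * n + 1 := by omega
      have h2 : 2 * (n + 1) + 1 = (2 * n + 1) + 2 := by omega
      rw [h1, h2]
      push_cast
      ring
  have key : (1 - y ^ 2) * Sd y = Sd y - y ^ 2 * Sd y := by ring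
  rw [key, stepB, stepA, ← Summable.tsum_sub hA hB]
  have : ∀ k : ℕ, (2 * (k:ℝ) + 2) * aDF (k + 1) * y ^ (2 * k + 1)
      - 2 * (k:ℝ) * aDF k * y ^ (2 * k + 1) = y * (aDF k * y ^ (2 * k)) := by
    intro k
    have h := aDF_succ k
    have h2 : y ^ (2 * k + 1) = y * y ^ (2 * k) := by rw [pow_succ]; ring
    rw [h2]
    linear_combination (y * y ^ (2 * k)) * h
  rw [tsum_congr this, tsum_mul_left]
  rfl

lemma Sfun_eq {y : ℝ} (hy : |y| < 1) : Sfun y = 1 / √(1 - y ^ 2) := by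
  set F : ℝ → ℝ := fun z => Sfun z * √(1 - z ^ 2) with hF
  have hFderiv : ∀ z ∈ Set.Ioo (-1:ℝ) 1, HasDerivAt F 0 z := by
    intro z hz
    have hz1 : |z| < 1 := abs_lt.2 ⟨hz.1, hz.2⟩
    have h1 : (0:ℝ) < 1 - z ^ 2 := by nlinarith [sq_lt_one_iff_abs_lt_one (a := z) |>.2 hz1]
    have hqpos : 0 < √(1 - z ^ 2) := sqrt_pos.2 h1
    have hinner : HasDerivAt (fun z : ℝ => 1 - z ^ 2) (-(2 * z)) z := by
      have := (hasDerivAt_pow 2 z).const_sub 1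
      simpa using this
    have hsq : HasDerivAt (fun z : ℝ => √(1 - z ^ 2)) (-z / √(1 - z ^ 2)) z := by
      have h := (Real.hasDerivAt_sqrt h1.ne').comp z hinner
      refine h.congr_deriv ?_
      field_simp
    have hD := (hasDerivAt_Sfun hz1).mul hsq
    have hzero : Sd z * √(1 - z ^ 2) + Sfun z * (-z / √(1 - z ^ 2)) = 0 := by
      have hmul : √(1 - z ^ 2) * √(1 - z ^ 2) = 1 - z ^ 2 := Real.mul_self_sqrt h1.le
      have hode := ode hz1
      field_simp
      linear_combination Sd z * hmul + hode
    rw [hzero] at hD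
    exact hD
  have hcont : ∀ z ∈ Set.Ioo (-1:ℝ) 1, ContinuousAt F z :=
    fun z hz => (hFderiv z hz).continuousAt
  have hF0 : F 0 = 1 := by
    have hS0 : Sfun 0 = 1 := by
      unfold Sfun
      rw [tsum_eq_single 0]
      · simp [aDF_zero]
      · intro k hk
        have : 2 * k ≠ 0 := by omega
        simp [zero_pow this]
    simp [hF, hS0]
  have hconst : F y = 1 := by
    rcases le_or_gt 0 y with h0 | h0
    · have := constant_of_has_deriv_right_zero (f := F) (a := 0) (b := y)
        (fun z hz => by
          refine (hcont z ?_).continuousWithinAt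
          constructor <;> [linarith [hz.1, abs_lt.1 hy]; linarith [hz.2, (abs_lt.1 hy).2]])
        (fun z hz => (hFderiv z ⟨by linarith [hz.1], by linarith [hz.2, (abs_lt.1 hy).2]⟩).hasDerivWithinAt)
        y (Set.mem_Icc.2 ⟨h0, le_refl y⟩)
      rw [this, hF0]
    · have := constant_of_has_deriv_right_zero (f := F) (a := y) (b := 0)
        (fun z hz => by
          refine (hcont z ?_).continuousWithinAt
          constructor <;> [linarith [hz.1, (abs_lt.1 hy).1]; linarith [hz.2]])
        (fun z hz => (hFderiv z ⟨by linarith [hz.1, (abs_lt.1 hy).1], by linarith [hz.2]⟩).hasDerivWithinAt)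
        0 (Set.mem_Icc.2 ⟨h0.le, le_refl 0⟩)
      rw [hF0] at this
      linarith [this]
  have h1 : (0:ℝ) < 1 - y ^ 2 := by nlinarith [sq_lt_one_iff_abs_lt_one (a := y) |>.2 hy]
  have hqpos : 0 < √(1 - y ^ 2) := sqrt_pos.2 h1
  rw [eq_div_iff hqpos.ne']
  exact hconst


lemma Gfun_eq {y : ℝ} (hy : |y| < 1) : Gfun y = arcsin y := by
  set F : ℝ → ℝ := fun z => Gfun z - arcsin z with hF
  have hFderiv : ∀ z ∈ Set.Ioo (-1:ℝ) 1, HasDerivAt F 0 z := by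
    intro z hz
    have hz1 : |z| < 1 := abs_lt.2 ⟨hz.1, hz.2⟩
    have hne1 : z ≠ -1 := by intro h; rw [h] at hz1; norm_num at hz1
    have hne2 : z ≠ 1 := by intro h; rw [h] at hz1; norm_num at hz1
    have hD := (hasDerivAt_Gfun hz1).sub (Real.hasDerivAt_arcsin hne1 hne2)
    rw [Sfun_eq hz1, sub_self] at hD
    exact hD
  have hcont : ∀ z ∈ Set.Ioo (-1:ℝ) 1, ContinuousAt F z :=
    fun z hz => (hFderiv z hz).continuousAt
  have hF0 : F 0 = 0 := by
    have hG0 : Gfun 0 = 0 := by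
      unfold Gfun
      convert tsum_zero with k
      simp
    simp [hF, hG0]
  have hconst : F y = 0 := by
    rcases le_or_gt 0 y with h0 | h0
    · have := constant_of_has_deriv_right_zero (f := F) (a := 0) (b := y)
        (fun z hz => by
          refine (hcont z ?_).continuousWithinAt
          constructor <;> [linarith [hz.1]; linarith [hz.2, (abs_lt.1 hy).2]])
        (fun z hz => (hFderiv z ⟨by linarith [hz.1], by linarith [hz.2, (abs_lt.1 hy).2]⟩).hasDerivWithinAt)
        y (Set.mem_Icc.2 ⟨h0, le_refl y⟩)
      rw [this, hF0]
    · have := constant_of_has_deriv_right_zero (f := F) (a := y) (b := 0)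
        (fun z hz => by
          refine (hcont z ?_).continuousWithinAt
          constructor <;> [linarith [hz.1, (abs_lt.1 hy).1]; linarith [hz.2]])
        (fun z hz => (hFderiv z ⟨by linarith [hz.1, (abs_lt.1 hy).1], by linarith [hz.2]⟩).hasDerivWithinAt)
        0 (Set.mem_Icc.2 ⟨h0.le, le_refl 0⟩)
      rw [hF0] at this
      have h2 := this
      simp only [hF] at h2 ⊢
      linarith
  have := hconst
  simp only [hF] at this
  linarith

theorem arctan_arcsin_series (r : ℝ) :
    Real.arctan r =
      (r / Real.sqrt (1 + r ^ 2)) *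
        ∑' k : ℕ, (oddDF' k / (evenDF k * (2 * k + 1))) * (r ^ 2 / (1 + r ^ 2)) ^ k := by
  have h1 : (0:ℝ) < 1 + r ^ 2 := by positivity
  set y : ℝ := r / √(1 + r ^ 2) with hy_def
  have hy2 : y ^ 2 = r ^ 2 / (1 + r ^ 2) := by
    rw [hy_def, div_pow, Real.sq_sqrt h1.le]
  have hy : |y| < 1 := by
    rw [← sq_lt_one_iff_abs_lt_one, hy2, div_lt_one h1]
    nlinarith
  rw [Real.arctan_eq_arcsin, ← Gfun_eq hy]
  unfold Gfun
  have step : ∀ k : ℕ, cDF k * y ^ (2 * k + 1) = y * (cDF k * (y ^ 2) ^ k) := by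
    intro k
    rw [pow_succ, pow_mul]
    ring
  rw [tsum_congr step, tsum_mul_left, hy2]
  rfl
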